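/- Let F be a cumulative distribution function on ℝ with quantile function Q, and let p > 0. Then |x|^p F(x) → 0 as x → −∞ and |x|^p (1−F(x)) → 0 as x → +∞ if and only if u^{1/p}(1−u)^{1/p} Q(u) → 0 as u → 0⁺ and as u → 1⁻. -/

import Mathlib

open MeasureTheory Set Filter Topology

theorem stmt3 (μ : Measure ℝ) [IsProbabilityMeasure μ] (p : ℝ) (hp : 0 < p)
    (F : ℝ → ℝ) (hF : ∀ x, F x = (μ (Set.Iic x)).toReal)
    (hFc : Continuous F) (hFsm : StrictMono F)
    (Q : ℝ → ℝ) (hQ : ∀ u, Q u = sInf {x : ℝ | u ≤ F x}) :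
    (Tendsto (fun x => |x| ^ p * F x) atBot (𝓝 0) ∧
        Tendsto (fun x => |x| ^ p * (1 - F x)) atTop (𝓝 0)) ↔
      (Tendsto (fun u => u ^ (1 / p) * (1 - u) ^ (1 / p) * Q u) (𝓝[>] (0:ℝ)) (𝓝 0) ∧
        Tendsto (fun u => u ^ (1 / p) * (1 - u) ^ (1 / p) * Q u) (𝓝[<] (1:ℝ)) (𝓝 0)) := by
  -- basic bounds on F
  have hF0 : ∀ x, 0 ≤ F x := fun x => by rw [hF x]; exact ENNReal.toReal_nonneg
  have hF1 : ∀ x, F x ≤ 1 := by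
    intro x
    rw [hF x]
    have : (μ (Set.Iic x)).toReal ≤ (1 : ENNReal).toReal :=
      ENNReal.toReal_mono ENNReal.one_ne_top prob_le_one
    simpa using this
  -- limits of F at ±∞
  have F0 : Tendsto F atBot (𝓝 0) := by
    have h : Tendsto (fun x => μ (Set.Iic x)) atBot (𝓝 (μ (⋂ x : ℝ, Set.Iic x))) :=
      tendsto_measure_iInter_atBot (fun i => measurableSet_Iic.nullMeasurableSet)
        (fun a b hab => Iic_subset_Iic.2 hab) ⟨0, measure_ne_top μ _⟩
    have he : (⋂ x : ℝ, Set.Iic x) = ∅ := by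
      ext y; simp only [mem_iInter, mem_Iic, mem_empty_iff_false, iff_false, not_forall]
      exact ⟨y - 1, by push_neg; linarith⟩
    rw [he, measure_empty] at h
    have h2 := (ENNReal.tendsto_toReal (by simp)).comp h
    exact h2.congr fun x => (hF x).symm
  have F1 : Tendsto F atTop (𝓝 1) := by
    have h := tendsto_measure_Iic_atTop μ
    rw [measure_univ] at h
    have h2 := (ENNReal.tendsto_toReal (by simp)).comp h
    exact h2.congr fun x => (hF x).symm
  have hFpos : ∀ x, 0 < F x := fun x => (hF0 (x - 1)).trans_lt (hFsm (by linarith))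
  have hFlt1 : ∀ x, F x < 1 := fun x => (hFsm (lt_add_one x)).trans_le (hF1 (x + 1))
  -- Q ∘ F = id
  have hQF : ∀ x, Q (F x) = x := by
    intro x
    rw [hQ]
    have hs : {y : ℝ | F x ≤ F y} = Ici x := by ext y; simp [hFsm.le_iff_le]
    rw [hs, csInf_Ici]
  -- F ∘ Q = id on (0,1)
  have hFQ : ∀ u ∈ Ioo (0:ℝ) 1, F (Q u) = u := by
    intro u hu
    obtain ⟨a, ha⟩ := (F0.eventually_lt_const hu.1).exists
    obtain ⟨b, hb⟩ := (F1.eventually_const_lt hu.2).exists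
    have hab : a ≤ b := (hFsm.lt_iff_lt.1 (ha.trans hb)).le
    obtain ⟨x, -, hx⟩ := intermediate_value_Icc hab hFc.continuousOn ⟨ha.le, hb.le⟩
    rw [← hx, hQF x]
  -- Q tends to -∞ at 0⁺ and +∞ at 1⁻
  have hQbot : Tendsto Q (𝓝[>] (0:ℝ)) atBot := by
    rw [tendsto_atBot]
    intro c
    have hmem : Ioo (0:ℝ) (min (F c) 1) ∈ 𝓝[>] (0:ℝ) :=
      Ioo_mem_nhdsGT_of_mem ⟨le_refl 0, lt_min (hFpos c) one_pos⟩
    filter_upwards [hmem] with u hu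
    have hu1 : u ∈ Ioo (0:ℝ) 1 := ⟨hu.1, hu.2.trans_le (min_le_right _ _)⟩
    have h5 : F (Q u) ≤ F c := by
      rw [hFQ u hu1]; exact (hu.2.trans_le (min_le_left _ _)).le
    exact hFsm.le_iff_le.1 h5
  have hQtop : Tendsto Q (𝓝[<] (1:ℝ)) atTop := by
    rw [tendsto_atTop]
    intro c
    have hmem : Ioo (max (F c) 0) 1 ∈ 𝓝[<] (1:ℝ) :=
      Ioo_mem_nhdsLT_of_mem ⟨max_lt (hFlt1 c) one_pos, le_refl 1⟩
    filter_upwards [hmem] with u hu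
    have hu1 : u ∈ Ioo (0:ℝ) 1 := ⟨(le_max_right _ _).trans_lt hu.1, hu.2⟩
    have h5 : F c < F (Q u) := by
      rw [hFQ u hu1]; exact (le_max_left _ _).trans_lt hu.1
    exact (hFsm.lt_iff_lt.1 h5).le
  have hFbot' : Tendsto F atBot (𝓝[>] (0:ℝ)) :=
    tendsto_nhdsWithin_of_tendsto_nhds_of_eventually_within F F0
      (Eventually.of_forall fun x => hFpos x)
  have hFtop' : Tendsto F atTop (𝓝[<] (1:ℝ)) :=
    tendsto_nhdsWithin_of_tendsto_nhds_of_eventually_within F F1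
      (Eventually.of_forall fun x => hFlt1 x)
  have hIoo0 : Ioo (0:ℝ) 1 ∈ 𝓝[>] (0:ℝ) := Ioo_mem_nhdsGT_of_mem ⟨le_refl 0, one_pos⟩
  have hIoo1 : Ioo (0:ℝ) 1 ∈ 𝓝[<] (1:ℝ) := Ioo_mem_nhdsLT_of_mem ⟨one_pos, le_refl 1⟩
  constructor
  · rintro ⟨h1, h2⟩
    constructor
    · -- near 0⁺
      have h1' : Tendsto (fun x => |x| * F x ^ (1 / p)) atBot (𝓝 0) := by
        have c : ContinuousAt (fun t : ℝ => t ^ (1 / p)) 0 :=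
          Real.continuousAt_rpow_const 0 (1 / p) (Or.inr (by positivity))
        have h := c.tendsto.comp h1
        rw [Real.zero_rpow (by positivity)] at h
        refine h.congr fun x => ?_
        simp only [Function.comp]
        rw [Real.mul_rpow (by positivity) (hF0 x), ← Real.rpow_mul (abs_nonneg x),
          mul_one_div_cancel hp.ne', Real.rpow_one]
      have hg : Tendsto (fun x => F x ^ (1 / p) * (1 - F x) ^ (1 / p) * x) atBot (𝓝 0) := by
        refine squeeze_zero_norm (fun x => ?_) h1'
        have h0 : (0:ℝ) ≤ F x ^ (1 / p) := Real.rpow_nonneg (hF0 x) _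
        have h0' : (0:ℝ) ≤ (1 - F x) ^ (1 / p) := Real.rpow_nonneg (by linarith [hF1 x]) _
        have hle : (1 - F x) ^ (1 / p) ≤ 1 :=
          Real.rpow_le_one (by linarith [hF1 x]) (by linarith [hF0 x]) (by positivity)
        calc ‖F x ^ (1 / p) * (1 - F x) ^ (1 / p) * x‖
            = F x ^ (1 / p) * (1 - F x) ^ (1 / p) * |x| := by
              rw [Real.norm_eq_abs, abs_mul, abs_mul, abs_of_nonneg h0, abs_of_nonneg h0']
          _ ≤ F x ^ (1 / p) * 1 * |x| := by gcongr
          _ = |x| * F x ^ (1 / p) := by ring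
      have h := hg.comp hQbot
      refine Tendsto.congr' ?_ h
      filter_upwards [hIoo0] with u hu
      simp only [Function.comp]
      rw [hFQ u hu]
    · -- near 1⁻
      have h2' : Tendsto (fun x => |x| * (1 - F x) ^ (1 / p)) atTop (𝓝 0) := by
        have c : ContinuousAt (fun t : ℝ => t ^ (1 / p)) 0 :=
          Real.continuousAt_rpow_const 0 (1 / p) (Or.inr (by positivity))
        have h := c.tendsto.comp h2
        rw [Real.zero_rpow (by positivity)] at h
        refine h.congr fun x => ?_
        simp only [Function.comp]
        rw [Real.mul_rpow (by positivity) (by linarith [hF1 x]), ← Real.rpow_mul (abs_nonneg x),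
          mul_one_div_cancel hp.ne', Real.rpow_one]
      have hg : Tendsto (fun x => F x ^ (1 / p) * (1 - F x) ^ (1 / p) * x) atTop (𝓝 0) := by
        refine squeeze_zero_norm (fun x => ?_) h2'
        have h0 : (0:ℝ) ≤ F x ^ (1 / p) := Real.rpow_nonneg (hF0 x) _
        have h0' : (0:ℝ) ≤ (1 - F x) ^ (1 / p) := Real.rpow_nonneg (by linarith [hF1 x]) _
        have hle : F x ^ (1 / p) ≤ 1 :=
          Real.rpow_le_one (hF0 x) (hF1 x) (by positivity)
        calc ‖F x ^ (1 / p) * (1 - F x) ^ (1 / p) * x‖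
            = F x ^ (1 / p) * (1 - F x) ^ (1 / p) * |x| := by
              rw [Real.norm_eq_abs, abs_mul, abs_mul, abs_of_nonneg h0, abs_of_nonneg h0']
          _ ≤ 1 * (1 - F x) ^ (1 / p) * |x| := by gcongr
          _ = |x| * (1 - F x) ^ (1 / p) := by ring
      have h := hg.comp hQtop
      refine Tendsto.congr' ?_ h
      filter_upwards [hIoo1] with u hu
      simp only [Function.comp]
      rw [hFQ u hu]
  · rintro ⟨h1, h2⟩
    constructor
    · -- at -∞
      have hd : Tendsto (fun u : ℝ => (1 - u) ^ (1 / p)) (𝓝[>] (0:ℝ)) (𝓝 1) := by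
        have c1 : ContinuousAt (fun t : ℝ => t ^ (1 / p)) 1 :=
          Real.continuousAt_rpow_const 1 (1 / p) (Or.inl one_ne_zero)
        have c2 : ContinuousAt (fun u : ℝ => 1 - u) (0:ℝ) := by fun_prop
        have c : ContinuousAt (fun u : ℝ => (1 - u) ^ (1 / p)) 0 := by
          have c1' : ContinuousAt (fun t : ℝ => t ^ (1 / p)) (1 - 0 : ℝ) := by
            simpa using c1
          exact c1'.comp c2
        have h := c.tendsto
        simp only [sub_zero, Real.one_rpow] at h
        exact h.mono_left nhdsWithin_le_nhds
      have h2q : Tendsto (fun u => u ^ (1 / p) * Q u) (𝓝[>] (0:ℝ)) (𝓝 0) := by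
        have h := h1.div hd one_ne_zero
        rw [zero_div] at h
        refine Tendsto.congr' ?_ h
        filter_upwards [hIoo0] with u hu
        have hne : (1 - u) ^ (1 / p) ≠ 0 :=
          (Real.rpow_pos_of_pos (by linarith [hu.2]) _).ne'
        rw [Pi.div_apply]
        field_simp
      have h3 : Tendsto (fun u => |Q u| ^ p * u) (𝓝[>] (0:ℝ)) (𝓝 0) := by
        have c : ContinuousAt (fun t : ℝ => |t| ^ p) 0 := by
          have c1 : ContinuousAt (fun s : ℝ => s ^ p) (|0| : ℝ) :=
            Real.continuousAt_rpow_const _ p (Or.inr hp.le)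
          exact c1.comp continuous_abs.continuousAt
        have h := c.tendsto.comp h2q
        simp only [abs_zero, Real.zero_rpow hp.ne'] at h
        refine Tendsto.congr' ?_ h
        filter_upwards [self_mem_nhdsWithin] with u hu
        have hu0 : (0:ℝ) < u := hu
        simp only [Function.comp]
        rw [abs_mul, abs_of_nonneg (Real.rpow_nonneg hu0.le _),
          Real.mul_rpow (Real.rpow_nonneg hu0.le _) (abs_nonneg _),
          ← Real.rpow_mul hu0.le, one_div_mul_cancel hp.ne', Real.rpow_one, mul_comm]
      have h := h3.comp hFbot'
      refine h.congr fun x => ?_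
      simp only [Function.comp]
      rw [hQF x]
    · -- at +∞
      have hd : Tendsto (fun u : ℝ => u ^ (1 / p)) (𝓝[<] (1:ℝ)) (𝓝 1) := by
        have c1 : ContinuousAt (fun t : ℝ => t ^ (1 / p)) 1 :=
          Real.continuousAt_rpow_const 1 (1 / p) (Or.inl one_ne_zero)
        have h := c1.tendsto
        rw [Real.one_rpow] at h
        exact h.mono_left nhdsWithin_le_nhds
      have h2q : Tendsto (fun u => (1 - u) ^ (1 / p) * Q u) (𝓝[<] (1:ℝ)) (𝓝 0) := by
        have h := h2.div hd one_ne_zero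
        rw [zero_div] at h
        refine Tendsto.congr' ?_ h
        filter_upwards [hIoo1] with u hu
        have hne : u ^ (1 / p) ≠ 0 := (Real.rpow_pos_of_pos hu.1 _).ne'
        rw [Pi.div_apply]
        field_simp
      have h3 : Tendsto (fun u => |Q u| ^ p * (1 - u)) (𝓝[<] (1:ℝ)) (𝓝 0) := by
        have c : ContinuousAt (fun t : ℝ => |t| ^ p) 0 := by
          have c1 : ContinuousAt (fun s : ℝ => s ^ p) (|0| : ℝ) :=
            Real.continuousAt_rpow_const _ p (Or.inr hp.le)
          exact c1.comp continuous_abs.continuousAt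
        have h := c.tendsto.comp h2q
        simp only [abs_zero, Real.zero_rpow hp.ne'] at h
        refine Tendsto.congr' ?_ h
        filter_upwards [self_mem_nhdsWithin] with u hu
        have hu1 : u < 1 := hu
        simp only [Function.comp]
        rw [abs_mul, abs_of_nonneg (Real.rpow_nonneg (by linarith : (0:ℝ) ≤ 1 - u) _),
          Real.mul_rpow (Real.rpow_nonneg (by linarith) _) (abs_nonneg _),
          ← Real.rpow_mul (by linarith : (0:ℝ) ≤ 1 - u), one_div_mul_cancel hp.ne',
          Real.rpow_one, mul_comm]
      have h := h3.comp hFtop'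
      refine h.congr fun x => ?_
      simp only [Function.comp]
      rw [hQF x]
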